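/- (Iterated growth estimate, equation (2.8).) Let (x_n, y_n, z_n)_{n≥0} be a compatible resistance sequence of positive triples with x0 ≥ y0 > z0. Set λ0 = 2x0/(y0 + z0) and ρ = (1/5)(6 − 1/λ0). Then λ0 > 1, ρ > 1, and for every n ≥ 0: 2x_n/(y_n + z_n) ≥ λ0 · ρ^n; in particular 2x_n/(y_n + z_n) → ∞ as n → ∞. -/

import Mathlib

noncomputable section

/-- Δ-Y transfer term `φ(x; y, z) = (x+y)(x+z)/(2(x+y+z))`. -/
def phi (x y z : ℝ) : ℝ := (x + y) * (x + z) / (2 * (x + y + z))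

/-- A compatible resistance sequence of positive triples. -/
def IsCompat (X Y Z : ℕ → ℝ) : Prop :=
  (∀ n, 0 < X n ∧ 0 < Y n ∧ 0 < Z n) ∧
  ∀ n, X n = X (n + 1) + phi (X (n + 1)) (Y (n + 1)) (Z (n + 1)) ∧
       Y n = Y (n + 1) + phi (Y (n + 1)) (Z (n + 1)) (X (n + 1)) ∧
       Z n = Z (n + 1) + phi (Z (n + 1)) (X (n + 1)) (Y (n + 1))

lemma core (lam0 a μ c : ℝ) (hl : 1 < lam0) (h : lam0 ≤ a) (hμ : 0 < μ)
    (hc0 : 0 < c) (hc1 : c ≤ 1)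
    (key : 2 * a * (2 * μ + 3) = 3 * μ ^ 2 + 6 * μ + c) :
    (6 - 1 / lam0) / 5 * a ≤ μ := by
  have hl0 : 0 < lam0 := by linarith
  have ha : 0 < a := by linarith
  have hd : (0:ℝ) < 2 * μ + 3 := by linarith
  have h1 : 2 * lam0 * (2 * μ + 3) ≤ 3 * μ ^ 2 + 6 * μ + 1 := by nlinarith [mul_le_mul_of_nonneg_right h (by linarith : (0:ℝ) ≤ 2 * (2 * μ + 3))]
  have h2 : 1 < μ := by nlinarith [mul_pos (sub_pos.2 hl) hd]
  have h3 : lam0 ≤ μ := by nlinarith [sq_nonneg (μ - 1)]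
  have h4 : 0 ≤ (2*lam0+3)*μ^2 - 6*(lam0-1)*μ - (6*lam0-1) := by
    nlinarith [mul_nonneg (sub_nonneg.2 h3) (le_of_lt (sub_pos.2 hl)), sq_nonneg (lam0 - 1), mul_nonneg (sub_nonneg.2 h3) (le_of_lt hl0), mul_nonneg (sub_nonneg.2 h3) hμ.le]
  have h5 : (6*lam0-1)*a ≤ 5*lam0*μ := by
    nlinarith [mul_le_mul_of_nonneg_left hc1 (by linarith : (0:ℝ) ≤ 6*lam0-1), mul_pos hl0 hd, mul_nonneg (mul_nonneg hl0.le hμ.le) hd.le, mul_nonneg h4 hd.le]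
  have heq : (6 - 1 / lam0) / 5 = (6*lam0-1)/(5*lam0) := by
    rw [div_eq_div_iff (by norm_num) (by positivity)]; field_simp
  rw [heq, div_mul_eq_mul_div, div_le_iff₀ (by positivity)]
  linarith

lemma step (x y z lam0 : ℝ) (hx : 0 < x) (hy : 0 < y) (hz : 0 < z)
    (hl : 1 < lam0)
    (h : lam0 ≤ 2 * (x + phi x y z) / ((y + phi y z x) + (z + phi z x y))) :
    (6 - 1 / lam0) / 5 * (2 * (x + phi x y z) / ((y + phi y z x) + (z + phi z x y))) ≤ 2 * x / (y + z) := by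
  have hs : (0:ℝ) < x + y + z := by linarith
  have ht : (0:ℝ) < y + z := by linarith
  have hden : (0:ℝ) < (y + phi y z x) + (z + phi z x y) := by
    have h1 : 0 < phi y z x := by unfold phi; positivity
    have h2 : 0 < phi z x y := by
      unfold phi
      have : (0:ℝ) < 2 * (z + x + y) := by linarith
      positivity
    linarith
  set a := 2 * (x + phi x y z) / ((y + phi y z x) + (z + phi z x y)) with hadef
  set μ := 2 * x / (y + z) with hμdef
  have hμ : 0 < μ := by positivity
  have hμt : μ * (y + z) = 2 * x := by rw [hμdef, div_mul_cancel₀ _ ht.ne']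
  have ha : a * ((y + phi y z x) + (z + phi z x y)) = 2 * (x + phi x y z) := by
    rw [hadef, div_mul_cancel₀ _ hden.ne']
  have hexp : ((y + phi y z x) + (z + phi z x y)) * (2 * (x + y + z)) = (y + z) * (4*x + 3*y + 3*z) := by
    unfold phi
    field_simp
    ring
  have hexp2 : (2 * (x + phi x y z)) * (2 * (x + y + z)) = 2 * (6*x^2 + 6*x*y + 6*x*z + 2*y*z) / 2 := by
    unfold phi
    field_simp
    ring
  have ha2 : a * ((y + z) * (4*x + 3*y + 3*z)) = 6*x^2 + 6*x*y + 6*x*z + 2*y*z := by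
    have := congrArg (· * (2 * (x + y + z))) ha
    rw [mul_assoc, hexp] at this
    rw [this, hexp2]; ring
  set c := 4 * y * z / (y + z)^2 with hcdef
  have hc0 : 0 < c := by positivity
  have hc1 : c ≤ 1 := by
    rw [div_le_one (by positivity)]
    nlinarith [sq_nonneg (y - z)]
  have key : 2 * a * (2 * μ + 3) = 3 * μ ^ 2 + 6 * μ + c := by
    have h2 : c * (y+z)^2 = 4*y*z := by rw [hcdef, div_mul_cancel₀ _ (by positivity)]
    have h3 : (2 * a * (2 * μ + 3)) * (y+z)^2 = (3 * μ ^ 2 + 6 * μ + c) * (y+z)^2 := by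
      linear_combination 2*ha2 + (4*a*(y+z) - 3*(μ*(y+z)+2*x) - 6*(y+z))*hμt - h2
    have h4 : (y+z)^2 ≠ 0 := by positivity
    exact mul_right_cancel₀ h4 h3
  exact core lam0 a μ c hl h hμ hc0 hc1 key

theorem stmt9 (X Y Z : ℕ → ℝ) (hcompat : IsCompat X Y Z)
    (h1 : Y 0 ≤ X 0) (h2 : Z 0 < Y 0)
    (lam0 rho : ℝ) (hlam : lam0 = 2 * X 0 / (Y 0 + Z 0))
    (hrho : rho = (6 - 1 / lam0) / 5) :
    1 < lam0 ∧ 1 < rho ∧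
    (∀ n, lam0 * rho ^ n ≤ 2 * X n / (Y n + Z n)) ∧
    Filter.Tendsto (fun n => 2 * X n / (Y n + Z n)) Filter.atTop Filter.atTop := by
  obtain ⟨hpos, hrec⟩ := hcompat
  obtain ⟨hx0, hy0, hz0⟩ := hpos 0
  have ht0 : 0 < Y 0 + Z 0 := by linarith
  have hl : 1 < lam0 := by
    rw [hlam, lt_div_iff₀ ht0]; linarith
  have hl0 : 0 < lam0 := by linarith
  have hr : 1 < rho := by
    rw [hrho, lt_div_iff₀ (by norm_num : (0:ℝ) < 5)]
    have : 1 / lam0 < 1 := by rw [div_lt_one hl0]; exact hl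
    linarith
  have hr0 : 0 < rho := by linarith
  have hmain : ∀ n, lam0 * rho ^ n ≤ 2 * X n / (Y n + Z n) := by
    intro n
    induction n with
    | zero => simp [hlam]
    | succ n ih =>
      obtain ⟨hx, hy, hz⟩ := hpos (n + 1)
      have hrhon : (1:ℝ) ≤ rho ^ n := one_le_pow₀ hr.le
      have hln : lam0 ≤ 2 * X n / (Y n + Z n) := by
        calc lam0 = lam0 * 1 := by ring
        _ ≤ lam0 * rho ^ n := by nlinarith
        _ ≤ _ := ih
      obtain ⟨e1, e2, e3⟩ := hrec n
      have hstep := step (X (n+1)) (Y (n+1)) (Z (n+1)) lam0 hx hy hz hl (by rw [← e1, ← e2, ← e3]; exact hln)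
      rw [← e1, ← e2, ← e3] at hstep
      calc lam0 * rho ^ (n+1) = rho * (lam0 * rho ^ n) := by ring
      _ ≤ rho * (2 * X n / (Y n + Z n)) := by nlinarith
      _ ≤ _ := by rw [hrho]; exact hstep
  refine ⟨hl, hr, hmain, ?_⟩
  apply Filter.tendsto_atTop_mono hmain
  exact Filter.Tendsto.const_mul_atTop hl0 (tendsto_pow_atTop_atTop_of_one_lt hr)
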